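/- Let K = Matrix.fromBlocks 0 B C D, where the upper-left block is the n×n zero matrix, D : Matrix (Fin m) (Fin m) ℂ is normal (IsStarNormal), B : Matrix (Fin n) (Fin m) ℂ and C : Matrix (Fin m) (Fin n) ℂ, with n, m ≥ 1. Let γ > 0 and w ≥ 0 be real numbers, and assume: every eigenvalue μ ∈ spectrum ℂ D satisfies |μ| ≤ Real.exp (−(w+1)·γ); ‖B‖ ≤ Real.exp (−(w/2+1)·γ); and ‖C‖ ≤ Real.exp (−(w/2+1)·γ), where ‖·‖ is the ℓ²-operator norm. Then every eigenvalue λ ∈ spectrum ℂ K satisfies |λ| ≤ Real.exp (−(w/2+1)·γ) · (1 + Real.exp (−w·γ/2)). (This is the quantitative matrix core of the paper's Lemma 2: a weight-w eigenmode-free circuit with end-of-period depolarization of strength γ has spectral radius at most e^{−(w/2+1)γ}(1 + e^{−wγ/2}), hence Liouvillian gap at least (w/2+1)γ in the strong-dissipation regime.) -/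

import Mathlib

/-- The ℓ²-operator norm of a (rectangular) complex matrix: the operator norm of
the induced linear map between Euclidean spaces. -/
noncomputable def l2OpNorm {m n : Type*} [Fintype m] [Fintype n] [DecidableEq n]
    (M : Matrix m n ℂ) : ℝ :=
  ‖LinearMap.toContinuousLinearMap (Matrix.toEuclideanLin M)‖

open Matrix
open scoped Matrix.Norms.L2Operator

/-- **Quantitative matrix core of Lemma 2 (gap lower bound).**
For `K = fromBlocks 0 B C D` with zero upper-left block and normal `D`, if all
eigenvalues of `D` have modulus at most `e^{-(w+1)γ}` and
`‖B‖, ‖C‖ ≤ e^{-(w/2+1)γ}`, then every eigenvalue `λ` of `K` satisfies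
`|λ| ≤ e^{-(w/2+1)γ}(1 + e^{-wγ/2})`. -/
theorem gap_lower_bound_matrix_core {n m : ℕ} (hn : 1 ≤ n) (hm : 1 ≤ m)
    (B : Matrix (Fin n) (Fin m) ℂ) (C : Matrix (Fin m) (Fin n) ℂ)
    (D : Matrix (Fin m) (Fin m) ℂ) (hD : IsStarNormal D)
    (γ w : ℝ) (hγ : 0 < γ) (hw : 0 ≤ w)
    (hspecD : ∀ μ ∈ spectrum ℂ D, ‖μ‖ ≤ Real.exp (-((w + 1) * γ)))
    (hB : l2OpNorm B ≤ Real.exp (-((w / 2 + 1) * γ)))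
    (hC : l2OpNorm C ≤ Real.exp (-((w / 2 + 1) * γ)))
    (lam : ℂ)
    (hK : lam ∈ spectrum ℂ (Matrix.fromBlocks (0 : Matrix (Fin n) (Fin n) ℂ) B C D)) :
    ‖lam‖ ≤ Real.exp (-((w / 2 + 1) * γ)) * (1 + Real.exp (-(w * γ / 2))) := by
  classical
  haveI : Nonempty (Fin n) := ⟨⟨0, hn⟩⟩
  haveI : Nonempty (Fin m) := ⟨⟨0, hm⟩⟩
  set a := Real.exp (-((w / 2 + 1) * γ)) with ha
  set b := Real.exp (-((w + 1) * γ)) with hb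
  have ha0 : 0 < a := Real.exp_pos _
  have hb0 : 0 < b := Real.exp_pos _
  have hab : a * Real.exp (-(w * γ / 2)) = b := by
    rw [ha, hb, ← Real.exp_add]; ring_nf
  rw [mul_add, mul_one, hab]
  by_contra hcon
  push_neg at hcon
  have hlamD : lam ∉ spectrum ℂ D := fun h => by
    have := hspecD lam h; linarith
  set N : Matrix (Fin m) (Fin m) ℂ := algebraMap ℂ _ lam - D with hN
  have hNu : IsUnit N := spectrum.notMem_iff.mp hlamD
  have hDc : Dᴴ * D = D * Dᴴ := by
    simpa [Matrix.star_eq_conjTranspose] using hD.star_comm_self.eq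
  have hNn : IsStarNormal N := by
    constructor
    show star N * N = N * star N
    rw [hN, Algebra.algebraMap_eq_smul_one]
    simp only [star_sub, star_smul, star_one, Matrix.star_eq_conjTranspose,
      Matrix.conjTranspose_one, sub_mul, mul_sub, smul_mul_assoc, Matrix.mul_smul,
      Matrix.one_mul, Matrix.mul_one, smul_smul, hDc]
    rw [mul_comm (star lam) lam]
    abel
  haveI : Invertible N := hNu.invertible
  have hNinv_n : IsStarNormal N⁻¹ := by
    constructor
    show star N⁻¹ * N⁻¹ = N⁻¹ * star N⁻¹
    rw [Matrix.star_eq_conjTranspose, Matrix.conjTranspose_nonsing_inv,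
      ← Matrix.mul_inv_rev, ← Matrix.mul_inv_rev]
    have : N * Nᴴ = Nᴴ * N := by
      simpa [Matrix.star_eq_conjTranspose] using hNn.star_comm_self.symm.eq
    rw [this]
  set d : ℝ := ‖lam‖ - b with hdd
  have hd : a < d := by rw [hdd]; linarith
  have hd0 : 0 < d := lt_trans ha0 hd
  -- spectrum bound for N⁻¹
  have hkbound : ∀ k ∈ spectrum ℂ N⁻¹, ‖k‖ ≤ 1 / d := by
    intro k hk
    have hinv : k ∈ (spectrum ℂ N)⁻¹ := by
      rw [← hNu.unit_spec, spectrum.map_inv hNu.unit]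
      rwa [← hNu.unit_spec, ← Matrix.coe_units_inv hNu.unit] at hk
    have hkinv : k⁻¹ ∈ spectrum ℂ N := Set.mem_inv.mp hinv
    rw [hN, ← spectrum.singleton_sub_eq] at hkinv
    obtain ⟨x, hx, y, hy, hxy⟩ := Set.mem_sub.mp hkinv
    rw [Set.mem_singleton_iff] at hx
    rw [hx] at hxy
    have hyb : ‖y‖ ≤ b := hspecD y hy
    have hlow : d ≤ ‖k⁻¹‖ := by
      rw [← hxy]
      have h := norm_sub_norm_le lam y
      rw [hdd]
      linarith
    rw [norm_inv] at hlow
    rcases eq_or_lt_of_le (norm_nonneg k) with h0 | h0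
    · rw [← h0]; positivity
    · have h1 : d * ‖k‖ ≤ 1 := by
        have := mul_le_mul_of_nonneg_right hlow (le_of_lt h0)
        rwa [inv_mul_cancel₀ (ne_of_gt h0)] at this
      rw [le_div_iff₀ hd0]
      linarith [h1, mul_comm d ‖k‖]
  have hNinv : ‖N⁻¹‖ ≤ 1 / d := by
    set T : EuclideanSpace ℂ (Fin m) →L[ℂ] EuclideanSpace ℂ (Fin m) :=
      Matrix.toEuclideanCLM (n := Fin m) (𝕜 := ℂ) N⁻¹ with hT
    haveI : IsStarNormal T := by
      constructor
      show star T * T = T * star T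
      rw [hT, ← map_star, ← _root_.map_mul, ← _root_.map_mul, hNinv_n.star_comm_self]
    have hspecT : spectrum ℂ T = spectrum ℂ N⁻¹ :=
      AlgEquiv.spectrum_eq (Matrix.toEuclideanCLM (n := Fin m) (𝕜 := ℂ)) N⁻¹
    have hradT : spectralRadius ℂ T ≤ ENNReal.ofReal (1 / d) := by
      rw [spectralRadius]
      refine iSup₂_le fun k hk => ?_
      rw [show ((‖k‖₊ : ENNReal)) = ENNReal.ofReal ‖k‖ from (ofReal_norm k).symm]
      refine ENNReal.ofReal_le_ofReal ?_
      have hk' : k ∈ spectrum ℂ N⁻¹ := hspecT ▸ hk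
      simpa using hkbound k hk'
    rw [IsStarNormal.spectralRadius_eq_nnnorm T] at hradT
    have h3 := ENNReal.toReal_le_of_le_ofReal (by positivity) hradT
    simp only [ENNReal.coe_toReal, coe_nnnorm] at h3
    rw [Matrix.cstar_norm_def]
    exact h3
  -- Schur complement
  have hsplit : algebraMap ℂ (Matrix (Fin n ⊕ Fin m) (Fin n ⊕ Fin m) ℂ) lam -
      Matrix.fromBlocks (0 : Matrix (Fin n) (Fin n) ℂ) B C D
      = Matrix.fromBlocks (algebraMap ℂ (Matrix (Fin n) (Fin n) ℂ) lam) (-B) (-C) N := by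
    rw [hN]
    ext (i | i) (j | j) <;>
      simp [Matrix.fromBlocks, Algebra.algebraMap_eq_smul_one, Matrix.one_apply]
  have hdetK : ¬ IsUnit (Matrix.fromBlocks (algebraMap ℂ (Matrix (Fin n) (Fin n) ℂ) lam)
      (-B) (-C) N) := by
    rw [← hsplit]
    exact spectrum.mem_iff.mp hK
  have hdet0 : (Matrix.fromBlocks (algebraMap ℂ (Matrix (Fin n) (Fin n) ℂ) lam)
      (-B) (-C) N).det = 0 := by
    by_contra h
    exact hdetK ((Matrix.isUnit_iff_isUnit_det _).mpr (isUnit_iff_ne_zero.mpr h))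
  have hSchur := Matrix.det_fromBlocks₂₂ (algebraMap ℂ (Matrix (Fin n) (Fin n) ℂ) lam)
    (-B) (-C) N
  simp only [Matrix.invOf_eq_nonsing_inv, Matrix.neg_mul, Matrix.mul_neg, neg_neg] at hSchur
  rw [hSchur] at hdet0
  have hdetN : N.det ≠ 0 := ((Matrix.isUnit_iff_isUnit_det _).mp hNu).ne_zero
  have h2 : (algebraMap ℂ (Matrix (Fin n) (Fin n) ℂ) lam - B * N⁻¹ * C).det = 0 := by
    rcases mul_eq_zero.mp hdet0 with h | h
    · exact absurd h hdetN
    · exact h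
  have hmem : lam ∈ spectrum ℂ (B * N⁻¹ * C) := by
    rw [spectrum.mem_iff]
    intro hu
    exact ((Matrix.isUnit_iff_isUnit_det _).mp hu).ne_zero h2
  -- norm chain
  have hBn : ‖B‖ ≤ a := hB
  have hCn : ‖C‖ ≤ a := hC
  have h1 : ‖lam‖ ≤ ‖B * N⁻¹ * C‖ := spectrum.norm_le_norm_of_mem hmem
  have h3 : ‖B * N⁻¹ * C‖ ≤ ‖B‖ * ‖N⁻¹‖ * ‖C‖ :=
    le_trans (Matrix.l2_opNorm_mul _ _)
      (mul_le_mul_of_nonneg_right (Matrix.l2_opNorm_mul _ _) (norm_nonneg _))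
  have hfin : ‖lam‖ ≤ a * (1 / d) * a := by
    calc ‖lam‖ ≤ ‖B‖ * ‖N⁻¹‖ * ‖C‖ := le_trans h1 h3
      _ ≤ a * (1 / d) * a := by
          have hN0 : (0:ℝ) ≤ ‖N⁻¹‖ := norm_nonneg _
          have hC0 : (0:ℝ) ≤ ‖C‖ := norm_nonneg _
          have hinner : ‖B‖ * ‖N⁻¹‖ ≤ a * (1 / d) :=
            mul_le_mul hBn hNinv hN0 ha0.le
          exact mul_le_mul hinner hCn hC0 (by positivity)
  -- contradiction
  have hlt : a * (1 / d) * a < a := by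
    have h4 : a * (1 / d) * a = a * a / d := by ring
    rw [h4, div_lt_iff₀ hd0]
    nlinarith
  linarith [hfin, hcon, hlt, hb0]
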